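/- The proximal mapping of a μ-strongly convex function is firmly nonexpansive in the strengthened sense: (1 + λμ)‖prox_{λf}(x) - prox_{λf}(y)‖² ≤ ⟨prox_{λf}(x) - prox_{λf}(y), x - y⟩ for all x, y ∈ H and λ > 0. -/

import Mathlib

open RealInnerProductSpace Filter

lemma comb_norm {H : Type*} [NormedAddCommGroup H] [InnerProductSpace ℝ H]
    (a b : ℝ) (hab : a + b = 1) (u v : H) :
    ‖a•u + b•v‖^2 = a*‖u‖^2 + b*‖v‖^2 - a*b*‖u-v‖^2 := by
  have hb : b = 1 - a := by linarith
  subst hb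
  simp only [← real_inner_self_eq_norm_sq, inner_add_add_self, inner_sub_sub_self,
    inner_smul_left, inner_smul_right, conj_trivial]
  rw [real_inner_comm v u]; ring

lemma min_growth {H : Type*} [NormedAddCommGroup H] [InnerProductSpace ℝ H]
    (c : ℝ) (g : H → ℝ) (p q : H)
    (hsc : ∀ t : ℝ, t ∈ Set.Ioo (0:ℝ) 1 →
      g ((1-t) • p + t • q) ≤ (1-t) * g p + t * g q - (1-t)*t*(c*‖p-q‖^2))
    (hp : IsMinOn g Set.univ p) : g p + c * ‖p-q‖^2 ≤ g q := by
  have key : ∀ t ∈ Set.Ioo (0:ℝ) 1, (1-t) * (c*‖p-q‖^2) ≤ g q - g p := by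
    intro t ht
    have h1 := hsc t ht
    have h2 : g p ≤ g ((1-t) • p + t • q) := hp (Set.mem_univ _)
    have ht0 := ht.1
    nlinarith [h2.trans h1]
  have hlim : Tendsto (fun t : ℝ => (1-t) * (c*‖p-q‖^2)) (nhdsWithin 0 (Set.Ioi 0))
      (nhds (c*‖p-q‖^2)) := by
    have : Tendsto (fun t : ℝ => (1-t) * (c*‖p-q‖^2)) (nhds 0) (nhds ((1-0) * (c*‖p-q‖^2))) :=
      ((continuous_const.sub continuous_id).mul continuous_const).tendsto 0
    simpa using this.mono_left nhdsWithin_le_nhds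
  have hev : ∀ᶠ t in nhdsWithin (0:ℝ) (Set.Ioi 0), (1-t) * (c*‖p-q‖^2) ≤ g q - g p := by
    filter_upwards [Ioo_mem_nhdsGT_of_mem (by simp : (0:ℝ) ∈ Set.Ico (0:ℝ) 1)] with t ht
    exact key t ht
  linarith [le_of_tendsto hlim hev]

/-- Strengthened firm nonexpansiveness of the proximal mapping of a μ-strongly
convex function. -/
theorem stmt_5 {H : Type*} [NormedAddCommGroup H] [InnerProductSpace ℝ H]
    (μ : ℝ) (hμ : 0 ≤ μ)
    (f : H → ℝ) (hf : StrongConvexOn Set.univ μ f) (hlsc : LowerSemicontinuous f)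
    (lam : ℝ) (hlam : 0 < lam)
    (x y p q : H)
    (hp : IsMinOn (fun z => f z + ‖z - x‖ ^ 2 / (2 * lam)) Set.univ p)
    (hq : IsMinOn (fun z => f z + ‖z - y‖ ^ 2 / (2 * lam)) Set.univ q) :
    (1 + lam * μ) * ‖p - q‖ ^ 2 ≤ ⟪p - q, x - y⟫ := by
  set c : ℝ := μ/2 + 1/(2*lam) with hc
  have hlam2 : (2*lam) ≠ 0 := by positivity
  have hscgen : ∀ (w r s : H), ∀ t ∈ Set.Ioo (0:ℝ) 1,
      (fun z => f z + ‖z - w‖^2/(2*lam)) ((1-t)•r + t•s) ≤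
      (1-t)*(f r + ‖r-w‖^2/(2*lam)) + t*(f s + ‖s-w‖^2/(2*lam)) - (1-t)*t*(c*‖r-s‖^2) := by
    intro w r s t ht
    have hfc := hf.2 (Set.mem_univ r) (Set.mem_univ s)
      (by linarith [ht.2] : (0:ℝ) ≤ 1-t) ht.1.le (by ring)
    simp only [smul_eq_mul] at hfc
    have hre : ((1-t)•r + t•s) - w = (1-t)•(r-w) + t•(s-w) := by module
    have hnorm := comb_norm (1-t) t (by ring) (r-w) (s-w)
    have hpq : (r-w)-(s-w) = r-s := by abel
    rw [hpq] at hnorm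
    have goaleq : (1-t)*(f r + ‖r-w‖^2/(2*lam)) + t*(f s + ‖s-w‖^2/(2*lam))
        - (1-t)*t*(c*‖r-s‖^2)
        = ((1-t)*f r + t*f s - (1-t)*t*(μ/2*‖r-s‖^2))
          + ((1-t)*‖r-w‖^2 + t*‖s-w‖^2 - (1-t)*t*‖r-s‖^2)/(2*lam) := by
      rw [hc]; field_simp; ring
    simp only [hre, hnorm, goaleq]
    exact add_le_add_left hfc _
  have g1 := min_growth c _ p q (hscgen x p q) hp
  have g2 := min_growth c _ q p (hscgen y q p) hq
  rw [norm_sub_rev q p] at g2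
  have expand : ‖q-x‖^2 + ‖p-y‖^2 - ‖p-x‖^2 - ‖q-y‖^2 = 2*⟪p-q,x-y⟫ := by
    simp only [norm_sub_sq_real, inner_sub_left, inner_sub_right]
    ring
  have h2 : ‖q-x‖^2/(2*lam) + ‖p-y‖^2/(2*lam) - ‖p-x‖^2/(2*lam) - ‖q-y‖^2/(2*lam)
      = ⟪p-q,x-y⟫/lam := by
    field_simp
    linear_combination expand
  have hs : 2*c*‖p-q‖^2 ≤ ⟪p-q,x-y⟫/lam := by
    rw [← h2]; linarith
  have hm := mul_le_mul_of_nonneg_left hs hlam.le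
  calc (1 + lam*μ)*‖p-q‖^2 = lam*(2*c*‖p-q‖^2) := by rw [hc]; field_simp; ring
    _ ≤ lam*(⟪p-q,x-y⟫/lam) := hm
    _ = ⟪p-q,x-y⟫ := mul_div_cancel₀ _ hlam.ne'
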